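/- In the diffusion-approximation setup, let X₀^{(m)} ∈ ℕ satisfy X₀^{(m)}/m → X̃₀ > 0 and let t ∈ [0,∞). Let I^{(m)}_n denote the relative entropy between the n-step path laws with parameters (β_A^{(m)}, α_A^{(m)}) and (β_H^{(m)}, α_H^{(m)}) and initial size X₀^{(m)}. Then lim_{m→∞} I^{(m)}_{⌊σ²·m·t⌋} exists and equals ((κ_A − κ_H)²/(2σ²·κ_A))·[ (X̃₀ − η/κ_A)·(1 − e^{−κ_A·t}) + η·t ] if κ_A > 0, and equals (κ_H²/(2σ²))·[ (η/2)·t² + X̃₀·t ] if κ_A = 0. -/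

import Mathlib

open Real Filter

/-- One transition weight of the Poisson Galton–Watson process with immigration:
probability that the next generation size is `y` given the previous size is `x`. -/
noncomputable def gwStep (β α : ℝ) (x y : ℕ) : ℝ :=
  Real.exp (-(β * (x : ℝ) + α)) * (β * (x : ℝ) + α) ^ y / (Nat.factorial y : ℝ)

/-- The `n`-step path law (pmf on `Fin n → ℕ`) with initial generation size `ω₀`. -/
noncomputable def gwPath (β α : ℝ) (ω₀ n : ℕ) (ω : Fin n → ℕ) : ℝ :=
  ∏ k : Fin n,
    gwStep β α
      (if (k : ℕ) = 0 then ω₀ else ω ⟨(k : ℕ) - 1, Nat.lt_of_le_of_lt (Nat.sub_le _ _) k.2⟩)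
      (ω k)

/-- Relative entropy between the `n`-step path laws (summands with vanishing
`p_A` contribute `0`, since they are multiplied by `p_A`). -/
noncomputable def relEnt (βA αA βH αH : ℝ) (ω₀ n : ℕ) : ℝ :=
  ∑' ω : Fin n → ℕ,
    gwPath βA αA ω₀ n ω * Real.log (gwPath βA αA ω₀ n ω / gwPath βH αH ω₀ n ω)

-- exp as tsum
lemma exp_tsum (l : ℝ) : ∑' y : ℕ, l ^ y / (Nat.factorial y : ℝ) = Real.exp l := by
  rw [Real.exp_eq_exp_ℝ, NormedSpace.exp_eq_tsum_div]

lemma pois_summable (l : ℝ) : Summable fun y : ℕ => l ^ y / (Nat.factorial y : ℝ) :=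
  Real.summable_pow_div_factorial l

lemma pois_mean_summable (l : ℝ) :
    Summable fun y : ℕ => (y : ℝ) * (l ^ y / (Nat.factorial y : ℝ)) := by
  rw [← summable_nat_add_iff 1]
  have : (fun y : ℕ => ((y+1 : ℕ) : ℝ) * (l ^ (y+1) / (Nat.factorial (y+1) : ℝ)))
      = fun y : ℕ => l * (l ^ y / (Nat.factorial y : ℝ)) := by
    funext y
    have h1 : (Nat.factorial (y+1) : ℝ) = ((y:ℝ)+1) * (Nat.factorial y : ℝ) := by
      rw [Nat.factorial_succ]; push_cast; ring
    have h2 : (Nat.factorial y : ℝ) ≠ 0 := by positivity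
    have h3 : ((y:ℝ)+1) ≠ 0 := by positivity
    field_simp [h1]
    rw [h1]; push_cast; ring
  rw [this]
  exact (pois_summable l).mul_left l

lemma pois_mean (l : ℝ) :
    ∑' y : ℕ, (y : ℝ) * (l ^ y / (Nat.factorial y : ℝ)) = l * Real.exp l := by
  rw [Summable.tsum_eq_zero_add (pois_mean_summable l)]
  simp only [Nat.cast_zero, zero_mul, zero_add]
  have : (fun y : ℕ => ((y+1 : ℕ) : ℝ) * (l ^ (y+1) / (Nat.factorial (y+1) : ℝ)))
      = fun y : ℕ => l * (l ^ y / (Nat.factorial y : ℝ)) := by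
    funext y
    have h1 : (Nat.factorial (y+1) : ℝ) = ((y:ℝ)+1) * (Nat.factorial y : ℝ) := by
      rw [Nat.factorial_succ]; push_cast; ring
    have h2 : (Nat.factorial y : ℝ) ≠ 0 := by positivity
    have h3 : ((y:ℝ)+1) ≠ 0 := by positivity
    field_simp [h1]
    rw [h1]; push_cast; ring
  push_cast at this ⊢
  rw [this, tsum_mul_left, exp_tsum]







lemma gwStep_eq (β α : ℝ) (x y : ℕ) :
    gwStep β α x y = Real.exp (-(β * (x:ℝ) + α)) * ((β * (x:ℝ) + α) ^ y / (Nat.factorial y : ℝ)) := by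
  rw [gwStep]; ring

lemma gwStep_summable (β α : ℝ) (x : ℕ) : Summable (gwStep β α x) := by
  simp only [funext (gwStep_eq β α x)]
  exact (pois_summable _).mul_left _

lemma gwStep_tsum (β α : ℝ) (x : ℕ) : ∑' y, gwStep β α x y = 1 := by
  simp only [funext (gwStep_eq β α x)]
  rw [tsum_mul_left, exp_tsum, ← Real.exp_add]
  rw [show -(β * (x:ℝ) + α) + (β * (x:ℝ) + α) = 0 by ring, Real.exp_zero]

lemma gwStep_mean_summable (β α : ℝ) (x : ℕ) :
    Summable fun y : ℕ => (y : ℝ) * gwStep β α x y := by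
  simp only [funext (gwStep_eq β α x)]
  have : (fun y : ℕ => (y:ℝ) * (Real.exp (-(β * (x:ℝ) + α)) * ((β * (x:ℝ) + α) ^ y / (Nat.factorial y : ℝ))))
      = fun y : ℕ => Real.exp (-(β * (x:ℝ) + α)) * ((y:ℝ) * ((β * (x:ℝ) + α) ^ y / (Nat.factorial y : ℝ))) := by
    funext y; ring
  rw [this]
  exact (pois_mean_summable _).mul_left _

lemma gwStep_mean (β α : ℝ) (x : ℕ) :
    ∑' y : ℕ, (y : ℝ) * gwStep β α x y = β * (x:ℝ) + α := by
  simp only [funext (gwStep_eq β α x)]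
  have : (fun y : ℕ => (y:ℝ) * (Real.exp (-(β * (x:ℝ) + α)) * ((β * (x:ℝ) + α) ^ y / (Nat.factorial y : ℝ))))
      = fun y : ℕ => Real.exp (-(β * (x:ℝ) + α)) * ((y:ℝ) * ((β * (x:ℝ) + α) ^ y / (Nat.factorial y : ℝ))) := by
    funext y; ring
  rw [this, tsum_mul_left, pois_mean, ← mul_assoc, mul_comm (Real.exp _) _, mul_assoc, ← Real.exp_add,
    show -(β * (x:ℝ) + α) + (β * (x:ℝ) + α) = 0 by ring, Real.exp_zero, mul_one]

lemma gwStep_lin_summable (β α A B : ℝ) (x : ℕ) :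
    Summable fun y : ℕ => gwStep β α x y * (A * (y:ℝ) + B) := by
  have : (fun y : ℕ => gwStep β α x y * (A * (y:ℝ) + B))
      = fun y : ℕ => A * ((y:ℝ) * gwStep β α x y) + B * gwStep β α x y := by
    funext y; ring
  rw [this]
  exact ((gwStep_mean_summable β α x).mul_left A).add ((gwStep_summable β α x).mul_left B)

lemma gwStep_lin (β α A B : ℝ) (x : ℕ) :
    ∑' y : ℕ, gwStep β α x y * (A * (y:ℝ) + B) = A * (β * (x:ℝ) + α) + B := by
  have : (fun y : ℕ => gwStep β α x y * (A * (y:ℝ) + B))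
      = fun y : ℕ => A * ((y:ℝ) * gwStep β α x y) + B * gwStep β α x y := by
    funext y; ring
  rw [this, Summable.tsum_add (((gwStep_mean_summable β α x).mul_left A))
    ((gwStep_summable β α x).mul_left B), tsum_mul_left, tsum_mul_left,
    gwStep_mean, gwStep_tsum, mul_one]

lemma gwStep_nonneg {β α : ℝ} (h : 0 ≤ β) (h2 : 0 ≤ α) (x y : ℕ) : 0 ≤ gwStep β α x y := by
  rw [gwStep]; positivity



variable {βA βH c : ℝ}

lemma step_pos_of_ne {β : ℝ} (hβ : 0 < β) (hc : 0 ≤ c) {x y : ℕ}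
    (h : gwStep β (β*c) x y ≠ 0) : 0 < gwStep β (β*c) x y := by
  rcases lt_or_eq_of_le (by rw [gwStep]; positivity : (0:ℝ) ≤ gwStep β (β*c) x y) with h'|h'
  · exact h'
  · exact absurd h'.symm h

lemma step_ne_cases {β : ℝ} (hβ : 0 < β) (hc : 0 ≤ c) {x y : ℕ}
    (h : gwStep β (β*c) x y ≠ 0) : 0 < (x:ℝ) + c ∨ y = 0 := by
  by_contra hcon
  push_neg at hcon
  obtain ⟨h1, h2⟩ := hcon
  have hxc : (x:ℝ) + c = 0 := le_antisymm h1 (by positivity)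
  apply h
  rw [gwStep]
  have : β * (x:ℝ) + β * c = 0 := by rw [← mul_add, hxc, mul_zero]
  rw [this, zero_pow h2]
  simp

lemma step_support (hβA : 0 < βA) (hβH : 0 < βH) (hc : 0 ≤ c) {x y : ℕ}
    (h : gwStep βA (βA*c) x y ≠ 0) : 0 < gwStep βH (βH*c) x y := by
  rcases step_ne_cases hβA hc h with h'|h'
  · rw [gwStep]
    have : 0 < βH * (x:ℝ) + βH * c := by rw [← mul_add]; positivity
    positivity
  · subst h'
    rw [gwStep]
    simp only [pow_zero, Nat.factorial_zero, Nat.cast_one, div_one, mul_one]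
    positivity

lemma step_logratio (hβA : 0 < βA) (hβH : 0 < βH) (hc : 0 ≤ c) {x y : ℕ}
    (h : gwStep βA (βA*c) x y ≠ 0) :
    Real.log (gwStep βA (βA*c) x y / gwStep βH (βH*c) x y)
      = (Real.log βA - Real.log βH) * (y:ℝ) - (βA - βH) * ((x:ℝ) + c) := by
  rcases step_ne_cases hβA hc h with h'|h'
  · have hfA : βA * (x:ℝ) + βA * c = βA * ((x:ℝ)+c) := by ring
    have hfH : βH * (x:ℝ) + βH * c = βH * ((x:ℝ)+c) := by ring
    have hA0 : (0:ℝ) < βA * ((x:ℝ)+c) := by positivity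
    have hH0 : (0:ℝ) < βH * ((x:ℝ)+c) := by positivity
    have hfac : (0:ℝ) < (Nat.factorial y : ℝ) := by positivity
    rw [gwStep, gwStep, hfA, hfH]
    rw [Real.log_div (by positivity) (by positivity),
      Real.log_div (by positivity) (by positivity),
      Real.log_div (by positivity) (by positivity),
      Real.log_mul (Real.exp_ne_zero _) (by positivity),
      Real.log_mul (Real.exp_ne_zero _) (by positivity),
      Real.log_exp, Real.log_exp, Real.log_pow, Real.log_pow,
      Real.log_mul (ne_of_gt hβA) (by positivity),
      Real.log_mul (ne_of_gt hβH) (by positivity)]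
    ring
  · subst h'
    have hfA : Real.exp (-(βA * (x:ℝ) + βA*c)) * (βA * (x:ℝ) + βA*c) ^ (0:ℕ) / (Nat.factorial 0 : ℝ)
        = Real.exp (-(βA * (x:ℝ) + βA*c)) := by simp
    rw [gwStep, gwStep, hfA]
    simp only [pow_zero, Nat.factorial_zero, Nat.cast_one, div_one, mul_one]
    rw [← Real.exp_sub, Real.log_exp]
    push_cast
    ring




lemma gwPath_zero (β α : ℝ) (x : ℕ) (ω : Fin 0 → ℕ) : gwPath β α x 0 ω = 1 := by
  rw [gwPath]; simp

lemma cons_prev (n y : ℕ) (w : Fin n → ℕ) (k : Fin n) (hp : (k:ℕ) < n+1) :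
    (Fin.cons y w : Fin (n+1) → ℕ) ⟨(k:ℕ), hp⟩
      = if (k:ℕ) = 0 then y else w ⟨(k:ℕ)-1, Nat.lt_of_le_of_lt (Nat.sub_le _ _) k.2⟩ := by
  by_cases h : (k:ℕ) = 0
  · rw [if_pos h]
    have : (⟨(k:ℕ), hp⟩ : Fin (n+1)) = 0 := by apply Fin.ext; simpa using h
    rw [this, Fin.cons_zero]
  · rw [if_neg h]
    have hk1 : (k:ℕ) - 1 < n := by omega
    have : (⟨(k:ℕ), hp⟩ : Fin (n+1)) = (⟨(k:ℕ)-1, hk1⟩ : Fin n).succ := by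
      apply Fin.ext; simp; omega
    rw [this, Fin.cons_succ]

lemma gwPath_succ (β α : ℝ) (x n y : ℕ) (w : Fin n → ℕ) :
    gwPath β α x (n+1) (Fin.cons y w) = gwStep β α x y * gwPath β α y n w := by
  rw [gwPath, gwPath, Fin.prod_univ_succ]
  congr 1
  apply Finset.prod_congr rfl
  intro k _
  have h1 : ((k.succ : Fin (n+1)) : ℕ) = (k:ℕ) + 1 := rfl
  simp only [h1, Fin.cons_succ, if_neg (by omega : ¬((k:ℕ)+1 = 0))]
  congr 1
  rw [show (⟨(k:ℕ)+1-1, by omega⟩ : Fin (n+1)) = ⟨(k:ℕ), by omega⟩ by apply Fin.ext; simp]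
  exact cons_prev n y w k _

section B1
variable {βA βH c : ℝ}

noncomputable def geomA (β : ℝ) (n : ℕ) : ℝ := ∑ k ∈ Finset.range n, β^k
noncomputable def bcoef (β c : ℝ) (n : ℕ) : ℝ := c * ∑ j ∈ Finset.range n, geomA β (j+1)
noncomputable def Kb (βA βH c : ℝ) : ℕ → ℝ
  | 0 => 0
  | n+1 => (|Real.log βA - Real.log βH| + |βA - βH| + Kb βA βH c n) * (βA+1) * (1+c)
      + Kb βA βH c n

noncomputable def Dv (βA βH : ℝ) : ℝ := βA * (Real.log βA - Real.log βH) - βA + βH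

lemma geomA_zero (β : ℝ) : geomA β 0 = 0 := by simp [geomA]
lemma geomA_succ (β : ℝ) (n : ℕ) : geomA β (n+1) = β * geomA β n + 1 := by
  rw [geomA, geomA, Finset.sum_range_succ']
  simp only [pow_succ, pow_zero]
  rw [← Finset.sum_mul]
  ring
lemma bcoef_zero (β c : ℝ) : bcoef β c 0 = 0 := by simp [bcoef]
lemma bcoef_succ (β c : ℝ) (n : ℕ) : bcoef β c (n+1) = c * geomA β (n+1) + bcoef β c n := by
  rw [bcoef, bcoef, Finset.sum_range_succ]; ring

lemma Kb_nonneg (hβA : 0 < βA) (hc : 0 ≤ c) (n : ℕ) : 0 ≤ Kb βA βH c n := by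
  induction n with
  | zero => simp [Kb]
  | succ n IH =>
    rw [Kb]
    have h1 : (0:ℝ) ≤ |Real.log βA - Real.log βH| := abs_nonneg _
    have h2 : (0:ℝ) ≤ |βA - βH| := abs_nonneg _
    have h3 : (0:ℝ) ≤ (|Real.log βA - Real.log βH| + |βA - βH| + Kb βA βH c n) * (βA+1) * (1+c) :=
      mul_nonneg (mul_nonneg (by linarith) (by linarith)) (by linarith)
    linarith

lemma gwPath_nonneg {β α : ℝ} (hβ : 0 ≤ β) (hα : 0 ≤ α) (x n : ℕ) (ω : Fin n → ℕ) :
    0 ≤ gwPath β α x n ω :=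
  Finset.prod_nonneg fun _ _ => gwStep_nonneg hβ hα _ _

lemma gwPath_support (hβA : 0 < βA) (hβH : 0 < βH) (hc : 0 ≤ c) :
    ∀ (n x : ℕ) (ω : Fin n → ℕ), gwPath βA (βA*c) x n ω ≠ 0 → 0 < gwPath βH (βH*c) x n ω := by
  intro n
  induction n with
  | zero => intro x ω _; rw [gwPath_zero]; norm_num
  | succ n IH =>
    intro x ω h
    rw [← Fin.cons_self_tail ω] at h ⊢
    rw [gwPath_succ] at h ⊢
    rcases mul_ne_zero_iff.1 h with ⟨h1, h2⟩
    exact mul_pos (step_support hβA hβH hc h1) (IH _ _ h2)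

lemma gwPath_pos_of_ne (hβA : 0 < βA) (hc : 0 ≤ c) {n x : ℕ} {ω : Fin n → ℕ}
    (h : gwPath βA (βA*c) x n ω ≠ 0) : 0 < gwPath βA (βA*c) x n ω :=
  (lt_of_le_of_ne (gwPath_nonneg hβA.le (by positivity) x n ω) (Ne.symm h))

lemma gwPath_mass {β α : ℝ} (hβ : 0 ≤ β) (hα : 0 ≤ α) :
    ∀ n x, Summable (gwPath β α x n) ∧ ∑' ω, gwPath β α x n ω = 1 := by
  intro n
  induction n with
  | zero =>
    intro x
    refine ⟨Summable.of_finite, ?_⟩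
    rw [tsum_eq_single (fun i => i.elim0) (by intro b hb; exact absurd (Subsingleton.elim b _) hb)]
    exact gwPath_zero β α x _
  | succ n IH =>
    intro x
    set e := Fin.consEquiv (fun _ : Fin (n+1) => ℕ) with he
    have key : (gwPath β α x (n+1)) ∘ e = fun p : ℕ × (Fin n → ℕ) =>
        gwStep β α x p.1 * gwPath β α p.1 n p.2 := by
      funext p
      exact gwPath_succ β α x n p.1 p.2
    have hnn : ∀ p : ℕ × (Fin n → ℕ), 0 ≤ gwStep β α x p.1 * gwPath β α p.1 n p.2 :=
      fun p => mul_nonneg (gwStep_nonneg hβ hα _ _) (gwPath_nonneg hβ hα _ _ _)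
    have hslice : ∀ y : ℕ, Summable fun w : Fin n → ℕ => gwStep β α x y * gwPath β α y n w :=
      fun y => ((IH y).1).mul_left _
    have hcol : (fun y : ℕ => ∑' w : Fin n → ℕ, gwStep β α x y * gwPath β α y n w)
        = fun y : ℕ => gwStep β α x y := by
      funext y
      rw [tsum_mul_left, (IH y).2, mul_one]
    have hsum : Summable fun p : ℕ × (Fin n → ℕ) => gwStep β α x p.1 * gwPath β α p.1 n p.2 := by
      rw [summable_prod_of_nonneg hnn]
      exact ⟨hslice, by rw [hcol]; exact gwStep_summable β α x⟩
    constructor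
    · rw [← Equiv.summable_iff e, key]
      exact hsum
    · rw [← Equiv.tsum_eq e, show (fun p : ℕ × (Fin n → ℕ) => gwPath β α x (n+1) (e p))
        = (gwPath β α x (n+1)) ∘ e from rfl, key, Summable.tsum_prod' hsum hslice]
      simp only []
      rw [show (fun y : ℕ => ∑' w : Fin n → ℕ, gwStep β α x y * gwPath β α y n w)
          = fun y : ℕ => gwStep β α x y from hcol]
      exact gwStep_tsum β α x

end B1
section B2
variable {βA βH c : ℝ}

set_option maxHeartbeats 2000000 in
lemma main_ind (hβA : 0 < βA) (hβH : 0 < βH) (hc : 0 ≤ c) : ∀ (n : ℕ) (x : ℕ),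
    Summable (fun ω : Fin n → ℕ => gwPath βA (βA*c) x n ω *
      |Real.log (gwPath βA (βA*c) x n ω / gwPath βH (βH*c) x n ω)|)
    ∧ (∑' ω : Fin n → ℕ, gwPath βA (βA*c) x n ω *
        |Real.log (gwPath βA (βA*c) x n ω / gwPath βH (βH*c) x n ω)|) ≤ Kb βA βH c n * ((x:ℝ)+1)
    ∧ (∑' ω : Fin n → ℕ, gwPath βA (βA*c) x n ω *
        Real.log (gwPath βA (βA*c) x n ω / gwPath βH (βH*c) x n ω))
      = Dv βA βH * (geomA βA n * (x:ℝ) + bcoef βA c n) := by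
  have hαA : (0:ℝ) ≤ βA * c := by positivity
  intro n
  induction n with
  | zero =>
    intro x
    have huniq : ∀ (f : (Fin 0 → ℕ) → ℝ), ∑' ω, f ω = f (fun i => i.elim0) :=
      fun f => tsum_eq_single _ (by intro b hb; exact absurd (Subsingleton.elim b _) hb)
    refine ⟨Summable.of_finite, ?_, ?_⟩
    · rw [huniq, gwPath_zero, gwPath_zero]
      simp [Kb]
    · rw [huniq, gwPath_zero, gwPath_zero, geomA_zero, bcoef_zero]
      simp
  | succ n IH =>
    intro x
    -- step-level facts
    have Snn : ∀ y, 0 ≤ gwStep βA (βA*c) x y := fun y => gwStep_nonneg hβA.le hαA x y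
    have qnn : ∀ (y : ℕ) (w : Fin n → ℕ), 0 ≤ gwPath βA (βA*c) y n w :=
      fun y w => gwPath_nonneg hβA.le hαA y n w
    have hLb : ∀ y : ℕ, gwStep βA (βA*c) x y *
        |Real.log (gwStep βA (βA*c) x y / gwStep βH (βH*c) x y)| ≤
        gwStep βA (βA*c) x y *
          (|Real.log βA - Real.log βH| * (y:ℝ) + |βA - βH| * ((x:ℝ)+c)) := by
      intro y
      by_cases h : gwStep βA (βA*c) x y = 0
      · rw [h, zero_mul, zero_mul]
      · rw [step_logratio hβA hβH hc h]
        refine mul_le_mul_of_nonneg_left ?_ (Snn y)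
        calc |(Real.log βA - Real.log βH) * (y:ℝ) - (βA - βH) * ((x:ℝ) + c)|
            ≤ |(Real.log βA - Real.log βH) * (y:ℝ)| + |(βA - βH) * ((x:ℝ) + c)| :=
              abs_sub _ _
          _ = |Real.log βA - Real.log βH| * (y:ℝ) + |βA - βH| * ((x:ℝ)+c) := by
              rw [abs_mul, abs_mul, abs_of_nonneg (by positivity : (0:ℝ) ≤ (y:ℝ)),
                abs_of_nonneg (by positivity : (0:ℝ) ≤ (x:ℝ)+c)]
    have hSLabs_sum : Summable fun y => gwStep βA (βA*c) x y *
        |Real.log (gwStep βA (βA*c) x y / gwStep βH (βH*c) x y)| :=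
      Summable.of_nonneg_of_le (fun y => mul_nonneg (Snn y) (abs_nonneg _)) hLb
        (gwStep_lin_summable βA (βA*c) _ _ x)
    have habsmul : (fun y => |gwStep βA (βA*c) x y *
        Real.log (gwStep βA (βA*c) x y / gwStep βH (βH*c) x y)|)
        = fun y => gwStep βA (βA*c) x y *
          |Real.log (gwStep βA (βA*c) x y / gwStep βH (βH*c) x y)| := by
      funext y
      rw [abs_mul, abs_of_nonneg (Snn y)]
    have hSL_sum : Summable fun y => gwStep βA (βA*c) x y *
        Real.log (gwStep βA (βA*c) x y / gwStep βH (βH*c) x y) :=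
      Summable.of_abs (by rw [habsmul]; exact hSLabs_sum)
    have hSLval : ∑' y, gwStep βA (βA*c) x y *
        Real.log (gwStep βA (βA*c) x y / gwStep βH (βH*c) x y)
        = Dv βA βH * ((x:ℝ)+c) := by
      have heq : (fun y => gwStep βA (βA*c) x y *
          Real.log (gwStep βA (βA*c) x y / gwStep βH (βH*c) x y))
          = fun y => gwStep βA (βA*c) x y *
            ((Real.log βA - Real.log βH) * (y:ℝ) + (-(βA - βH) * ((x:ℝ)+c))) := by
        funext y
        by_cases h : gwStep βA (βA*c) x y = 0
        · rw [h, zero_mul, zero_mul]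
        · rw [step_logratio hβA hβH hc h]; ring
      rw [heq, gwStep_lin, Dv]; ring
    -- tail facts
    have hqMabs : ∀ y, (fun w => |gwPath βA (βA*c) y n w *
        Real.log (gwPath βA (βA*c) y n w / gwPath βH (βH*c) y n w)|)
        = fun w => gwPath βA (βA*c) y n w *
          |Real.log (gwPath βA (βA*c) y n w / gwPath βH (βH*c) y n w)| := by
      intro y; funext w; rw [abs_mul, abs_of_nonneg (qnn y w)]
    have hqM_sum : ∀ y, Summable fun w => gwPath βA (βA*c) y n w *
        Real.log (gwPath βA (βA*c) y n w / gwPath βH (βH*c) y n w) :=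
      fun y => Summable.of_abs (by rw [hqMabs y]; exact (IH y).1)
    -- column/slice helpers
    have hmass : ∀ y, Summable (gwPath βA (βA*c) y n) ∧ ∑' w, gwPath βA (βA*c) y n w = 1 :=
      fun y => gwPath_mass hβA.le hαA n y
    have slice1 : ∀ y : ℕ, Summable fun w : Fin n → ℕ =>
        (gwStep βA (βA*c) x y *
          |Real.log (gwStep βA (βA*c) x y / gwStep βH (βH*c) x y)|) *
          gwPath βA (βA*c) y n w :=
      fun y => ((hmass y).1).mul_left _
    have slice1s : ∀ y : ℕ, Summable fun w : Fin n → ℕ =>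
        (gwStep βA (βA*c) x y *
          Real.log (gwStep βA (βA*c) x y / gwStep βH (βH*c) x y)) *
          gwPath βA (βA*c) y n w :=
      fun y => ((hmass y).1).mul_left _
    have slice2 : ∀ y : ℕ, Summable fun w : Fin n → ℕ =>
        gwStep βA (βA*c) x y * (gwPath βA (βA*c) y n w *
          |Real.log (gwPath βA (βA*c) y n w / gwPath βH (βH*c) y n w)|) :=
      fun y => ((IH y).1).mul_left _
    have slice2s : ∀ y : ℕ, Summable fun w : Fin n → ℕ =>
        gwStep βA (βA*c) x y * (gwPath βA (βA*c) y n w *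
          Real.log (gwPath βA (βA*c) y n w / gwPath βH (βH*c) y n w)) :=
      fun y => (hqM_sum y).mul_left _
    have hcol1 : (fun y : ℕ => ∑' w : Fin n → ℕ,
        (gwStep βA (βA*c) x y *
          |Real.log (gwStep βA (βA*c) x y / gwStep βH (βH*c) x y)|) *
          gwPath βA (βA*c) y n w)
        = fun y : ℕ => gwStep βA (βA*c) x y *
          |Real.log (gwStep βA (βA*c) x y / gwStep βH (βH*c) x y)| := by
      funext y
      rw [tsum_mul_left, (hmass y).2, mul_one]
    have hcol1s : (fun y : ℕ => ∑' w : Fin n → ℕ,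
        (gwStep βA (βA*c) x y *
          Real.log (gwStep βA (βA*c) x y / gwStep βH (βH*c) x y)) *
          gwPath βA (βA*c) y n w)
        = fun y : ℕ => gwStep βA (βA*c) x y *
          Real.log (gwStep βA (βA*c) x y / gwStep βH (βH*c) x y) := by
      funext y
      rw [tsum_mul_left, (hmass y).2, mul_one]
    have hcol2 : (fun y : ℕ => ∑' w : Fin n → ℕ,
        gwStep βA (βA*c) x y * (gwPath βA (βA*c) y n w *
          |Real.log (gwPath βA (βA*c) y n w / gwPath βH (βH*c) y n w)|))
        = fun y : ℕ => gwStep βA (βA*c) x y * (∑' w : Fin n → ℕ,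
          gwPath βA (βA*c) y n w *
            |Real.log (gwPath βA (βA*c) y n w / gwPath βH (βH*c) y n w)|) := by
      funext y; rw [tsum_mul_left]
    have hcol2s : (fun y : ℕ => ∑' w : Fin n → ℕ,
        gwStep βA (βA*c) x y * (gwPath βA (βA*c) y n w *
          Real.log (gwPath βA (βA*c) y n w / gwPath βH (βH*c) y n w)))
        = fun y : ℕ => gwStep βA (βA*c) x y * (∑' w : Fin n → ℕ,
          gwPath βA (βA*c) y n w *
            Real.log (gwPath βA (βA*c) y n w / gwPath βH (βH*c) y n w)) := by
      funext y; rw [tsum_mul_left]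
    -- product families (abs)
    have hF1abs : Summable fun p : ℕ × (Fin n → ℕ) =>
        (gwStep βA (βA*c) x p.1 *
          |Real.log (gwStep βA (βA*c) x p.1 / gwStep βH (βH*c) x p.1)|) *
          gwPath βA (βA*c) p.1 n p.2 := by
      have hnn1 : ∀ p : ℕ × (Fin n → ℕ), 0 ≤ (gwStep βA (βA*c) x p.1 *
          |Real.log (gwStep βA (βA*c) x p.1 / gwStep βH (βH*c) x p.1)|) *
          gwPath βA (βA*c) p.1 n p.2 :=
        fun p => mul_nonneg (mul_nonneg (Snn p.1) (abs_nonneg _)) (qnn p.1 p.2)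
      rw [summable_prod_of_nonneg hnn1]
      exact ⟨slice1, by rw [hcol1]; exact hSLabs_sum⟩
    have hF1 : Summable fun p : ℕ × (Fin n → ℕ) =>
        (gwStep βA (βA*c) x p.1 *
          Real.log (gwStep βA (βA*c) x p.1 / gwStep βH (βH*c) x p.1)) *
          gwPath βA (βA*c) p.1 n p.2 := by
      apply Summable.of_abs
      have : (fun p : ℕ × (Fin n → ℕ) => |(gwStep βA (βA*c) x p.1 *
          Real.log (gwStep βA (βA*c) x p.1 / gwStep βH (βH*c) x p.1)) *
          gwPath βA (βA*c) p.1 n p.2|)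
          = fun p : ℕ × (Fin n → ℕ) => (gwStep βA (βA*c) x p.1 *
            |Real.log (gwStep βA (βA*c) x p.1 / gwStep βH (βH*c) x p.1)|) *
            gwPath βA (βA*c) p.1 n p.2 := by
        funext p
        rw [abs_mul, abs_mul, abs_of_nonneg (Snn p.1), abs_of_nonneg (qnn p.1 p.2)]
      rw [this]
      exact hF1abs
    have hcol2bound : ∀ y, gwStep βA (βA*c) x y * (∑' w, gwPath βA (βA*c) y n w *
        |Real.log (gwPath βA (βA*c) y n w / gwPath βH (βH*c) y n w)|)
        ≤ gwStep βA (βA*c) x y * (Kb βA βH c n * (y:ℝ) + Kb βA βH c n) := by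
      intro y
      have h1 := (IH y).2.1
      calc gwStep βA (βA*c) x y * (∑' w, gwPath βA (βA*c) y n w *
          |Real.log (gwPath βA (βA*c) y n w / gwPath βH (βH*c) y n w)|)
          ≤ gwStep βA (βA*c) x y * (Kb βA βH c n * ((y:ℝ)+1)) :=
            mul_le_mul_of_nonneg_left h1 (Snn y)
        _ = gwStep βA (βA*c) x y * (Kb βA βH c n * (y:ℝ) + Kb βA βH c n) := by ring
    have hcol2_sum : Summable fun y => gwStep βA (βA*c) x y *
        (∑' w, gwPath βA (βA*c) y n w *
          |Real.log (gwPath βA (βA*c) y n w / gwPath βH (βH*c) y n w)|) :=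
      Summable.of_nonneg_of_le
        (fun y => mul_nonneg (Snn y) (tsum_nonneg fun w =>
          mul_nonneg (qnn y w) (abs_nonneg _)))
        hcol2bound (gwStep_lin_summable βA (βA*c) _ _ x)
    have hF2abs : Summable fun p : ℕ × (Fin n → ℕ) =>
        gwStep βA (βA*c) x p.1 * (gwPath βA (βA*c) p.1 n p.2 *
          |Real.log (gwPath βA (βA*c) p.1 n p.2 / gwPath βH (βH*c) p.1 n p.2)|) := by
      have hnn2 : ∀ p : ℕ × (Fin n → ℕ), 0 ≤ gwStep βA (βA*c) x p.1 *
          (gwPath βA (βA*c) p.1 n p.2 *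
            |Real.log (gwPath βA (βA*c) p.1 n p.2 / gwPath βH (βH*c) p.1 n p.2)|) :=
        fun p => mul_nonneg (Snn p.1) (mul_nonneg (qnn p.1 p.2) (abs_nonneg _))
      rw [summable_prod_of_nonneg hnn2]
      exact ⟨slice2, by rw [hcol2]; exact hcol2_sum⟩
    have hF2 : Summable fun p : ℕ × (Fin n → ℕ) =>
        gwStep βA (βA*c) x p.1 * (gwPath βA (βA*c) p.1 n p.2 *
          Real.log (gwPath βA (βA*c) p.1 n p.2 / gwPath βH (βH*c) p.1 n p.2)) := by
      apply Summable.of_abs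
      have : (fun p : ℕ × (Fin n → ℕ) => |gwStep βA (βA*c) x p.1 *
          (gwPath βA (βA*c) p.1 n p.2 *
            Real.log (gwPath βA (βA*c) p.1 n p.2 / gwPath βH (βH*c) p.1 n p.2))|)
          = fun p : ℕ × (Fin n → ℕ) => gwStep βA (βA*c) x p.1 *
            (gwPath βA (βA*c) p.1 n p.2 *
              |Real.log (gwPath βA (βA*c) p.1 n p.2 / gwPath βH (βH*c) p.1 n p.2)|) := by
        funext p
        rw [abs_mul, abs_mul, abs_of_nonneg (Snn p.1), abs_of_nonneg (qnn p.1 p.2)]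
      rw [this]
      exact hF2abs
    -- the pointwise decomposition
    have key : ∀ p : ℕ × (Fin n → ℕ),
        gwPath βA (βA*c) x (n+1) (Fin.cons p.1 p.2) *
          Real.log (gwPath βA (βA*c) x (n+1) (Fin.cons p.1 p.2) /
            gwPath βH (βH*c) x (n+1) (Fin.cons p.1 p.2))
        = (gwStep βA (βA*c) x p.1 *
            Real.log (gwStep βA (βA*c) x p.1 / gwStep βH (βH*c) x p.1)) *
            gwPath βA (βA*c) p.1 n p.2
          + gwStep βA (βA*c) x p.1 * (gwPath βA (βA*c) p.1 n p.2 *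
            Real.log (gwPath βA (βA*c) p.1 n p.2 / gwPath βH (βH*c) p.1 n p.2)) := by
      rintro ⟨y, w⟩
      rw [gwPath_succ, gwPath_succ]
      by_cases h1 : gwStep βA (βA*c) x y = 0
      · dsimp only
        rw [h1]
        ring_nf
      by_cases h2 : gwPath βA (βA*c) y n w = 0
      · dsimp only
        rw [h2]
        ring_nf
      have hSpos := step_pos_of_ne hβA hc h1
      have hTpos := step_support hβA hβH hc h1
      have hqpos := gwPath_pos_of_ne hβA hc h2
      have hqHpos := gwPath_support hβA hβH hc n y w h2
      dsimp only
      rw [show gwStep βA (βA*c) x y * gwPath βA (βA*c) y n w /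
          (gwStep βH (βH*c) x y * gwPath βH (βH*c) y n w)
          = (gwStep βA (βA*c) x y / gwStep βH (βH*c) x y) *
            (gwPath βA (βA*c) y n w / gwPath βH (βH*c) y n w) from
          (div_mul_div_comm _ _ _ _).symm]
      rw [Real.log_mul (ne_of_gt (div_pos hSpos hTpos)) (ne_of_gt (div_pos hqpos hqHpos))]
      ring
    have keyabs : ∀ p : ℕ × (Fin n → ℕ),
        gwPath βA (βA*c) x (n+1) (Fin.cons p.1 p.2) *
          |Real.log (gwPath βA (βA*c) x (n+1) (Fin.cons p.1 p.2) /
            gwPath βH (βH*c) x (n+1) (Fin.cons p.1 p.2))|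
        ≤ (gwStep βA (βA*c) x p.1 *
            |Real.log (gwStep βA (βA*c) x p.1 / gwStep βH (βH*c) x p.1)|) *
            gwPath βA (βA*c) p.1 n p.2
          + gwStep βA (βA*c) x p.1 * (gwPath βA (βA*c) p.1 n p.2 *
            |Real.log (gwPath βA (βA*c) p.1 n p.2 / gwPath βH (βH*c) p.1 n p.2)|) := by
      rintro ⟨y, w⟩
      rw [gwPath_succ, gwPath_succ]
      dsimp only
      by_cases h1 : gwStep βA (βA*c) x y = 0
      · rw [h1]
        simp [mul_nonneg (qnn y w) (abs_nonneg _)]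
      by_cases h2 : gwPath βA (βA*c) y n w = 0
      · rw [h2]
        simp [mul_nonneg (Snn y) (abs_nonneg _), mul_nonneg (mul_nonneg (Snn y) (abs_nonneg _)) (qnn y w)]
      have hSpos := step_pos_of_ne hβA hc h1
      have hTpos := step_support hβA hβH hc h1
      have hqpos := gwPath_pos_of_ne hβA hc h2
      have hqHpos := gwPath_support hβA hβH hc n y w h2
      rw [show gwStep βA (βA*c) x y * gwPath βA (βA*c) y n w /
          (gwStep βH (βH*c) x y * gwPath βH (βH*c) y n w)
          = (gwStep βA (βA*c) x y / gwStep βH (βH*c) x y) *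
            (gwPath βA (βA*c) y n w / gwPath βH (βH*c) y n w) from
          (div_mul_div_comm _ _ _ _).symm]
      rw [Real.log_mul (ne_of_gt (div_pos hSpos hTpos)) (ne_of_gt (div_pos hqpos hqHpos))]
      calc gwStep βA (βA*c) x y * gwPath βA (βA*c) y n w *
          |Real.log (gwStep βA (βA*c) x y / gwStep βH (βH*c) x y) +
            Real.log (gwPath βA (βA*c) y n w / gwPath βH (βH*c) y n w)|
          ≤ gwStep βA (βA*c) x y * gwPath βA (βA*c) y n w *
            (|Real.log (gwStep βA (βA*c) x y / gwStep βH (βH*c) x y)| +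
              |Real.log (gwPath βA (βA*c) y n w / gwPath βH (βH*c) y n w)|) :=
            mul_le_mul_of_nonneg_left (abs_add_le _ _)
              (mul_nonneg (Snn y) (qnn y w))
        _ = (gwStep βA (βA*c) x y *
              |Real.log (gwStep βA (βA*c) x y / gwStep βH (βH*c) x y)|) *
              gwPath βA (βA*c) y n w
            + gwStep βA (βA*c) x y * (gwPath βA (βA*c) y n w *
              |Real.log (gwPath βA (βA*c) y n w / gwPath βH (βH*c) y n w)|) := by ring
    have hGnn : ∀ p : ℕ × (Fin n → ℕ),
        0 ≤ gwPath βA (βA*c) x (n+1) (Fin.cons p.1 p.2) *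
          |Real.log (gwPath βA (βA*c) x (n+1) (Fin.cons p.1 p.2) /
            gwPath βH (βH*c) x (n+1) (Fin.cons p.1 p.2))| :=
      fun p => mul_nonneg (gwPath_nonneg hβA.le hαA x (n+1) _) (abs_nonneg _)
    have hGsum : Summable fun p : ℕ × (Fin n → ℕ) =>
        gwPath βA (βA*c) x (n+1) (Fin.cons p.1 p.2) *
          |Real.log (gwPath βA (βA*c) x (n+1) (Fin.cons p.1 p.2) /
            gwPath βH (βH*c) x (n+1) (Fin.cons p.1 p.2))| :=
      Summable.of_nonneg_of_le hGnn keyabs (hF1abs.add hF2abs)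
    have hGsum' : Summable fun p : ℕ × (Fin n → ℕ) =>
        gwPath βA (βA*c) x (n+1) (Fin.cons p.1 p.2) *
          Real.log (gwPath βA (βA*c) x (n+1) (Fin.cons p.1 p.2) /
            gwPath βH (βH*c) x (n+1) (Fin.cons p.1 p.2)) := by
      have hkey : (fun p : ℕ × (Fin n → ℕ) =>
          gwPath βA (βA*c) x (n+1) (Fin.cons p.1 p.2) *
            Real.log (gwPath βA (βA*c) x (n+1) (Fin.cons p.1 p.2) /
              gwPath βH (βH*c) x (n+1) (Fin.cons p.1 p.2)))
          = fun p : ℕ × (Fin n → ℕ) =>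
            (gwStep βA (βA*c) x p.1 *
              Real.log (gwStep βA (βA*c) x p.1 / gwStep βH (βH*c) x p.1)) *
              gwPath βA (βA*c) p.1 n p.2
            + gwStep βA (βA*c) x p.1 * (gwPath βA (βA*c) p.1 n p.2 *
              Real.log (gwPath βA (βA*c) p.1 n p.2 / gwPath βH (βH*c) p.1 n p.2)) :=
        funext key
      rw [hkey]
      exact hF1.add hF2
    have hcomp : ∀ (f : (Fin (n+1) → ℕ) → ℝ),
        (f ∘ (Fin.consEquiv (fun _ : Fin (n+1) => ℕ)))
          = fun p : ℕ × (Fin n → ℕ) => f (Fin.cons p.1 p.2) := fun f => rfl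
    have hsum1 : Summable (fun ω : Fin (n+1) → ℕ => gwPath βA (βA*c) x (n+1) ω *
        |Real.log (gwPath βA (βA*c) x (n+1) ω / gwPath βH (βH*c) x (n+1) ω)|) := by
      rw [← Equiv.summable_iff (Fin.consEquiv (fun _ : Fin (n+1) => ℕ)), hcomp]
      exact hGsum
    have htrans : ∀ (f : (Fin (n+1) → ℕ) → ℝ),
        ∑' ω : Fin (n+1) → ℕ, f ω = ∑' p : ℕ × (Fin n → ℕ), f (Fin.cons p.1 p.2) := by
      intro f
      rw [← Equiv.tsum_eq (Fin.consEquiv (fun _ : Fin (n+1) => ℕ)) f]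
      rfl
    refine ⟨hsum1, ?_, ?_⟩
    · -- the bound
      rw [htrans]
      calc (∑' p : ℕ × (Fin n → ℕ),
            gwPath βA (βA*c) x (n+1) (Fin.cons p.1 p.2) *
              |Real.log (gwPath βA (βA*c) x (n+1) (Fin.cons p.1 p.2) /
                gwPath βH (βH*c) x (n+1) (Fin.cons p.1 p.2))|)
          ≤ ∑' p : ℕ × (Fin n → ℕ),
              ((gwStep βA (βA*c) x p.1 *
                |Real.log (gwStep βA (βA*c) x p.1 / gwStep βH (βH*c) x p.1)|) *
                gwPath βA (βA*c) p.1 n p.2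
              + gwStep βA (βA*c) x p.1 * (gwPath βA (βA*c) p.1 n p.2 *
                |Real.log (gwPath βA (βA*c) p.1 n p.2 / gwPath βH (βH*c) p.1 n p.2)|)) :=
            Summable.tsum_le_tsum keyabs hGsum (hF1abs.add hF2abs)
        _ = (∑' p : ℕ × (Fin n → ℕ),
              (gwStep βA (βA*c) x p.1 *
                |Real.log (gwStep βA (βA*c) x p.1 / gwStep βH (βH*c) x p.1)|) *
                gwPath βA (βA*c) p.1 n p.2)
            + ∑' p : ℕ × (Fin n → ℕ),
              gwStep βA (βA*c) x p.1 * (gwPath βA (βA*c) p.1 n p.2 *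
                |Real.log (gwPath βA (βA*c) p.1 n p.2 / gwPath βH (βH*c) p.1 n p.2)|) :=
            Summable.tsum_add hF1abs hF2abs
        _ = (∑' y : ℕ, gwStep βA (βA*c) x y *
              |Real.log (gwStep βA (βA*c) x y / gwStep βH (βH*c) x y)|)
            + ∑' y : ℕ, gwStep βA (βA*c) x y * (∑' w : Fin n → ℕ,
                gwPath βA (βA*c) y n w *
                  |Real.log (gwPath βA (βA*c) y n w / gwPath βH (βH*c) y n w)|) := by
            rw [Summable.tsum_prod' hF1abs slice1, Summable.tsum_prod' hF2abs slice2]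
            rw [show (∑' (y : ℕ) (w : Fin n → ℕ),
                (gwStep βA (βA*c) x y *
                  |Real.log (gwStep βA (βA*c) x y / gwStep βH (βH*c) x y)|) *
                  gwPath βA (βA*c) y n w)
                = ∑' y : ℕ, gwStep βA (βA*c) x y *
                  |Real.log (gwStep βA (βA*c) x y / gwStep βH (βH*c) x y)| from
              tsum_congr fun y => by rw [tsum_mul_left, (hmass y).2, mul_one]]
            rw [show (∑' (y : ℕ) (w : Fin n → ℕ),
                gwStep βA (βA*c) x y * (gwPath βA (βA*c) y n w *
                  |Real.log (gwPath βA (βA*c) y n w / gwPath βH (βH*c) y n w)|))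
                = ∑' y : ℕ, gwStep βA (βA*c) x y * (∑' w : Fin n → ℕ,
                  gwPath βA (βA*c) y n w *
                    |Real.log (gwPath βA (βA*c) y n w / gwPath βH (βH*c) y n w)|) from
              tsum_congr fun y => by rw [tsum_mul_left]]
        _ ≤ (∑' y : ℕ, gwStep βA (βA*c) x y *
              (|Real.log βA - Real.log βH| * (y:ℝ) + |βA - βH| * ((x:ℝ)+c)))
            + ∑' y : ℕ, gwStep βA (βA*c) x y *
              (Kb βA βH c n * (y:ℝ) + Kb βA βH c n) :=
            add_le_add
              (Summable.tsum_le_tsum hLb hSLabs_sum (gwStep_lin_summable βA (βA*c) _ _ x))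
              (Summable.tsum_le_tsum hcol2bound hcol2_sum (gwStep_lin_summable βA (βA*c) _ _ x))
        _ = (|Real.log βA - Real.log βH| * (βA * (x:ℝ) + βA*c) + |βA - βH| * ((x:ℝ)+c))
            + (Kb βA βH c n * (βA * (x:ℝ) + βA*c) + Kb βA βH c n) := by
            rw [gwStep_lin, gwStep_lin]
        _ ≤ Kb βA βH c (n+1) * ((x:ℝ)+1) := by
            rw [show Kb βA βH c (n+1)
              = (|Real.log βA - Real.log βH| + |βA - βH| + Kb βA βH c n) * (βA+1) * (1+c)
                + Kb βA βH c n from rfl]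
            have h1 : (0:ℝ) ≤ |Real.log βA - Real.log βH| := abs_nonneg _
            have h2 : (0:ℝ) ≤ |βA - βH| := abs_nonneg _
            have h3 : (0:ℝ) ≤ Kb βA βH c n := Kb_nonneg hβA hc n
            have hx : (0:ℝ) ≤ (x:ℝ) := Nat.cast_nonneg x
            nlinarith [mul_nonneg h1 hx, mul_nonneg h2 hx, mul_nonneg h3 hx,
              mul_nonneg (mul_nonneg h1 hx) hc, mul_nonneg (mul_nonneg h2 hx) hc,
              mul_nonneg (mul_nonneg h3 hx) hc, mul_nonneg hx hc,
              mul_nonneg (mul_nonneg h1 hβA.le) hc, mul_nonneg (mul_nonneg h2 hβA.le) hc,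
              mul_nonneg (mul_nonneg h3 hβA.le) hc,
              mul_nonneg (mul_nonneg (mul_nonneg h1 hβA.le) hx) hc,
              mul_nonneg (mul_nonneg (mul_nonneg h2 hβA.le) hx) hc,
              mul_nonneg (mul_nonneg (mul_nonneg h3 hβA.le) hx) hc,
              mul_nonneg h1 hβA.le, mul_nonneg h2 hβA.le, mul_nonneg h3 hβA.le,
              mul_nonneg (mul_nonneg h1 hβA.le) hx, mul_nonneg (mul_nonneg h2 hβA.le) hx,
              mul_nonneg (mul_nonneg h3 hβA.le) hx, mul_nonneg h1 hc, mul_nonneg h2 hc,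
              mul_nonneg h3 hc]
    · -- the value
      rw [htrans]
      rw [show (∑' p : ℕ × (Fin n → ℕ),
            gwPath βA (βA*c) x (n+1) (Fin.cons p.1 p.2) *
              Real.log (gwPath βA (βA*c) x (n+1) (Fin.cons p.1 p.2) /
                gwPath βH (βH*c) x (n+1) (Fin.cons p.1 p.2)))
          = ∑' p : ℕ × (Fin n → ℕ),
              ((gwStep βA (βA*c) x p.1 *
                Real.log (gwStep βA (βA*c) x p.1 / gwStep βH (βH*c) x p.1)) *
                gwPath βA (βA*c) p.1 n p.2
              + gwStep βA (βA*c) x p.1 * (gwPath βA (βA*c) p.1 n p.2 *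
                Real.log (gwPath βA (βA*c) p.1 n p.2 / gwPath βH (βH*c) p.1 n p.2))) from
        tsum_congr key]
      rw [Summable.tsum_add hF1 hF2, Summable.tsum_prod' hF1 slice1s, Summable.tsum_prod' hF2 slice2s]
      rw [show (∑' (y : ℕ) (w : Fin n → ℕ),
          (gwStep βA (βA*c) x y *
            Real.log (gwStep βA (βA*c) x y / gwStep βH (βH*c) x y)) *
            gwPath βA (βA*c) y n w)
          = ∑' y : ℕ, gwStep βA (βA*c) x y *
            Real.log (gwStep βA (βA*c) x y / gwStep βH (βH*c) x y) from
        tsum_congr fun y => by rw [tsum_mul_left, (hmass y).2, mul_one]]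
      rw [show (∑' (y : ℕ) (w : Fin n → ℕ),
          gwStep βA (βA*c) x y * (gwPath βA (βA*c) y n w *
            Real.log (gwPath βA (βA*c) y n w / gwPath βH (βH*c) y n w)))
          = ∑' y : ℕ, gwStep βA (βA*c) x y *
            ((Dv βA βH * geomA βA n) * (y:ℝ) + Dv βA βH * (bcoef βA c n)) from
        tsum_congr fun y => by
          rw [tsum_mul_left, (IH y).2.2]
          ring]
      rw [hSLval, gwStep_lin, geomA_succ, bcoef_succ, geomA_succ]
      ring
section C1

lemma relEnt_eq {βA βH c : ℝ} (hβA : 0 < βA) (hβH : 0 < βH) (hc : 0 ≤ c) (x n : ℕ) :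
    relEnt βA (βA*c) βH (βH*c) x n
      = Dv βA βH * (geomA βA n * (x:ℝ) + bcoef βA c n) := by
  rw [relEnt]
  exact (main_ind hβA hβH hc n x).2.2

lemma tendsto_xm (σ κ : ℝ) : Tendsto (fun m : ℕ => κ/(σ^2*(m:ℝ))) atTop (nhds 0) := by
  have h : (fun m : ℕ => κ/(σ^2*(m:ℝ))) = fun m : ℕ => (κ/σ^2)/(m:ℝ) := by
    funext m; rw [div_div]
  rw [h]
  exact tendsto_const_div_atTop_nhds_zero_nat _

lemma xm_nonneg {σ κ : ℝ} (hσ : 0 < σ) (hκ : 0 ≤ κ) (m : ℕ) : 0 ≤ κ/(σ^2*(m:ℝ)) := by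
  positivity

lemma tendsto_m2R (σ κ : ℝ) (hσ : 0 < σ) (hκ : 0 ≤ κ) :
    Tendsto (fun m : ℕ => (m:ℝ)^2 *
      (Real.log (1 - κ/(σ^2*(m:ℝ))) + κ/(σ^2*(m:ℝ)) + (κ/(σ^2*(m:ℝ)))^2/2))
      atTop (nhds 0) := by
  refine squeeze_zero_norm' ?_ (tendsto_const_div_atTop_nhds_zero_nat (2*(κ^3/σ^6)))
  · have h1 : ∀ᶠ m : ℕ in atTop, κ/(σ^2*(m:ℝ)) < 1/2 :=
      (tendsto_xm σ κ).eventually_lt_const (by norm_num)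
    filter_upwards [h1, eventually_ge_atTop 1] with m hm hm1
    set x := κ/(σ^2*(m:ℝ)) with hx
    have hx0 : 0 ≤ x := xm_nonneg hσ hκ m
    have hxabs : |x| < 1 := by rw [abs_of_nonneg hx0]; linarith
    have hb := Real.abs_log_sub_add_sum_range_le hxabs 2
    have hsum : ∑ i ∈ Finset.range 2, x^(i+1)/((i:ℝ)+1) = x + x^2/2 := by
      rw [Finset.sum_range_succ, Finset.sum_range_succ, Finset.sum_range_zero]
      norm_num
    rw [hsum] at hb
    have hb2 : |Real.log (1-x) + x + x^2/2| ≤ |x|^3/(1-|x|) := by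
      have : Real.log (1-x) + x + x^2/2 = x + x^2/2 + Real.log (1-x) := by ring
      rw [this]
      exact hb
    have hmpos : (0:ℝ) < (m:ℝ) := by exact_mod_cast hm1
    have hσm : (0:ℝ) < σ^2*(m:ℝ) := by positivity
    have hxval : |x|^3/(1-|x|) ≤ 2*(κ^3/σ^6)/(m:ℝ)^3 := by
      rw [abs_of_nonneg hx0]
      have h2 : (1:ℝ)/2 ≤ 1 - x := by linarith
      have hx3 : x^3 = κ^3/(σ^6*(m:ℝ)^3) := by
        rw [hx, div_pow]; ring_nf
      calc x^3/(1-x) ≤ x^3/(1/2) :=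
            div_le_div_of_nonneg_left (by positivity) (by norm_num) h2
        _ = 2*x^3 := by ring
        _ = 2*(κ^3/σ^6)/(m:ℝ)^3 := by rw [hx3]; field_simp; try ring
    calc ‖(m:ℝ)^2 * (Real.log (1-x) + x + x^2/2)‖
        = (m:ℝ)^2 * |Real.log (1-x) + x + x^2/2| := by
          rw [norm_mul, norm_pow, Real.norm_natCast, Real.norm_eq_abs]
      _ ≤ (m:ℝ)^2 * (2*(κ^3/σ^6)/(m:ℝ)^3) :=
          mul_le_mul_of_nonneg_left (hb2.trans hxval) (by positivity)
      _ = (2*(κ^3/σ^6))/(m:ℝ) := by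
          field_simp
          try ring

end C1
section C2

lemma tendsto_m2Dv (σ κA κH : ℝ) (hσ : 0 < σ) (hκA : 0 ≤ κA) (hκH : 0 ≤ κH) :
    Tendsto (fun m : ℕ => (m:ℝ)^2 * Dv (1 - κA/(σ^2*(m:ℝ))) (1 - κH/(σ^2*(m:ℝ))))
      atTop (nhds ((κA-κH)^2/(2*σ^4))) := by
  have hσ0 : σ ≠ 0 := ne_of_gt hσ
  have hGlim : Tendsto (fun m : ℕ =>
      (1 - κA/(σ^2*(m:ℝ))) *
        ((m:ℝ)^2 * (Real.log (1 - κA/(σ^2*(m:ℝ))) + κA/(σ^2*(m:ℝ)) + (κA/(σ^2*(m:ℝ)))^2/2)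
          - (m:ℝ)^2 * (Real.log (1 - κH/(σ^2*(m:ℝ))) + κH/(σ^2*(m:ℝ)) + (κH/(σ^2*(m:ℝ)))^2/2))
      + ((κA-κH)^2/(2*σ^4) - (κA*(κH^2-κA^2)/(2*σ^6))/(m:ℝ)))
      atTop (nhds ((1-0) * (0-0) + ((κA-κH)^2/(2*σ^4) - 0))) :=
    ((tendsto_const_nhds.sub (tendsto_xm σ κA)).mul
      ((tendsto_m2R σ κA hσ hκA).sub (tendsto_m2R σ κH hσ hκH))).add
      (tendsto_const_nhds.sub (tendsto_const_div_atTop_nhds_zero_nat (κA*(κH^2-κA^2)/(2*σ^6))))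
  rw [show ((1:ℝ)-0) * (0-0) + ((κA-κH)^2/(2*σ^4) - 0) = (κA-κH)^2/(2*σ^4) by ring] at hGlim
  apply hGlim.congr'
  filter_upwards [eventually_ge_atTop 1] with m hm
  have hm0 : ((m:ℝ)) ≠ 0 := by
    have : (1:ℝ) ≤ (m:ℝ) := by exact_mod_cast hm
    linarith
  rw [Dv]
  field_simp
  ring

lemma tendsto_floor_div (σ t : ℝ) (hσ : 0 < σ) (ht : 0 ≤ t) :
    Tendsto (fun m : ℕ => ((Nat.floor (σ^2*(m:ℝ)*t) : ℝ))/(m:ℝ)) atTop (nhds (σ^2*t)) := by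
  have hlow : Tendsto (fun m : ℕ => σ^2*t - 1/(m:ℝ)) atTop (nhds (σ^2*t - 0)) :=
    tendsto_const_nhds.sub tendsto_one_div_atTop_nhds_zero_nat
  rw [sub_zero] at hlow
  refine tendsto_of_tendsto_of_tendsto_of_le_of_le' hlow tendsto_const_nhds ?_ ?_
  · filter_upwards [eventually_ge_atTop 1] with m hm
    have hmpos : (0:ℝ) < (m:ℝ) := by exact_mod_cast hm
    have h1 : σ^2*(m:ℝ)*t - 1 < (Nat.floor (σ^2*(m:ℝ)*t) : ℝ) := by
      have := Nat.lt_floor_add_one (σ^2*(m:ℝ)*t)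
      linarith
    rw [le_div_iff₀ hmpos]
    have h2 : (1/(m:ℝ))*(m:ℝ) = 1 := by field_simp
    nlinarith [h1, h2]
  · filter_upwards [eventually_ge_atTop 1] with m hm
    have hmpos : (0:ℝ) < (m:ℝ) := by exact_mod_cast hm
    have h1 : (Nat.floor (σ^2*(m:ℝ)*t) : ℝ) ≤ σ^2*(m:ℝ)*t :=
      Nat.floor_le (by positivity)
    rw [div_le_iff₀ hmpos]
    calc (Nat.floor (σ^2*(m:ℝ)*t) : ℝ) ≤ σ^2*(m:ℝ)*t := h1
      _ = σ^2*t*(m:ℝ) := by ring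

lemma tendsto_mlog (σ κ : ℝ) (hσ : 0 < σ) (hκ : 0 ≤ κ) :
    Tendsto (fun m : ℕ => (m:ℝ) * Real.log (1 - κ/(σ^2*(m:ℝ)))) atTop (nhds (-κ/σ^2)) := by
  have hσ0 : σ ≠ 0 := ne_of_gt hσ
  have hGlim : Tendsto (fun m : ℕ =>
      (1/(m:ℝ)) * ((m:ℝ)^2 * (Real.log (1 - κ/(σ^2*(m:ℝ))) + κ/(σ^2*(m:ℝ)) + (κ/(σ^2*(m:ℝ)))^2/2))
      + (-κ/σ^2 - (κ^2/(2*σ^4))/(m:ℝ)))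
      atTop (nhds (0 * 0 + (-κ/σ^2 - 0))) :=
    (tendsto_one_div_atTop_nhds_zero_nat.mul (tendsto_m2R σ κ hσ hκ)).add
      (tendsto_const_nhds.sub (tendsto_const_div_atTop_nhds_zero_nat (κ^2/(2*σ^4))))
  rw [show (0:ℝ) * 0 + (-κ/σ^2 - 0) = -κ/σ^2 by ring] at hGlim
  apply hGlim.congr'
  filter_upwards [eventually_ge_atTop 1] with m hm
  have hm0 : ((m:ℝ)) ≠ 0 := by
    have : (1:ℝ) ≤ (m:ℝ) := by exact_mod_cast hm
    linarith
  field_simp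
  ring

lemma tendsto_pow_floor (σ κ t : ℝ) (hσ : 0 < σ) (hκ : 0 ≤ κ) (ht : 0 ≤ t) :
    Tendsto (fun m : ℕ => (1 - κ/(σ^2*(m:ℝ)))^(Nat.floor (σ^2*(m:ℝ)*t)))
      atTop (nhds (Real.exp (-κ*t))) := by
  have hnl : Tendsto (fun m : ℕ =>
      ((Nat.floor (σ^2*(m:ℝ)*t) : ℝ)) * Real.log (1 - κ/(σ^2*(m:ℝ))))
      atTop (nhds (-κ*t)) := by
    have h := (tendsto_floor_div σ t hσ ht).mul (tendsto_mlog σ κ hσ hκ)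
    rw [show σ^2*t * (-κ/σ^2) = -κ*t by field_simp] at h
    apply h.congr'
    filter_upwards [eventually_ge_atTop 1] with m hm
    have hm0 : ((m:ℝ)) ≠ 0 := by
      have : (1:ℝ) ≤ (m:ℝ) := by exact_mod_cast hm
      linarith
    field_simp
  have hexp : Tendsto (fun m : ℕ =>
      Real.exp (((Nat.floor (σ^2*(m:ℝ)*t) : ℝ)) * Real.log (1 - κ/(σ^2*(m:ℝ)))))
      atTop (nhds (Real.exp (-κ*t))) :=
    (Real.continuous_exp.tendsto _).comp hnl
  apply hexp.congr'
  have h1 : ∀ᶠ m : ℕ in atTop, κ/(σ^2*(m:ℝ)) < 1 :=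
    (tendsto_xm σ κ).eventually_lt_const (by norm_num)
  filter_upwards [h1] with m hm
  have hβ : 0 < 1 - κ/(σ^2*(m:ℝ)) := by linarith
  rw [← Real.log_pow, Real.exp_log (pow_pos hβ _)]

end C2
section C3

lemma geomA_one (n : ℕ) : geomA 1 n = (n:ℝ) := by simp [geomA]

lemma geomA_eq {β : ℝ} (hβ : β ≠ 1) (n : ℕ) : geomA β n = (1 - β^n)/(1 - β) := by
  have h1 : β - 1 ≠ 0 := sub_ne_zero.mpr hβ
  have h2 : (1:ℝ) - β ≠ 0 := fun h => h1 (by linarith [h])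
  rw [geomA, geom_sum_eq hβ, div_eq_div_iff h1 h2]
  ring

lemma sum_geomA (β : ℝ) (n : ℕ) :
    (1-β) * (∑ j ∈ Finset.range n, geomA β (j+1)) = (n:ℝ) - β * geomA β n := by
  induction n with
  | zero => simp [geomA_zero]
  | succ n IH =>
    rw [Finset.sum_range_succ, mul_add, IH, geomA_succ]
    push_cast
    ring

lemma sum_range_id' (n : ℕ) : ∑ j ∈ Finset.range n, ((j:ℝ)+1) = (n:ℝ)*((n:ℝ)+1)/2 := by
  induction n with
  | zero => simp
  | succ n IH =>
    rw [Finset.sum_range_succ, IH]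
    push_cast
    ring

/-- Closed-form limit of the relative entropy in the diffusion
approximation: with `β_•^{(m)} = 1 − κ_•/(σ²m)`, `α_•^{(m)} = β_•^{(m)}·η/σ²`, initial
sizes `X₀^{(m)}/m → X̃₀ > 0` and horizon `⌊σ²mt⌋`, the relative entropies converge to the
stated value (distinguishing the cases `κ_A > 0` and `κ_A = 0`). -/
theorem relEnt_diffusion_limit (σ η κA κH t : ℝ)
    (hσ : 0 < σ) (hη : 0 ≤ η) (hκA : 0 ≤ κA) (hκH : 0 ≤ κH) (hκ : κA ≠ κH) (ht : 0 ≤ t)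
    (X₀ : ℕ → ℕ) (Xt : ℝ) (hXt : 0 < Xt)
    (hX₀ : Tendsto (fun m : ℕ => (X₀ m : ℝ) / (m : ℝ)) atTop (nhds Xt))
    (Im : ℕ → ℝ)
    (hIm : ∀ m : ℕ, Im m = relEnt
      (1 - κA / (σ ^ 2 * (m : ℝ))) ((1 - κA / (σ ^ 2 * (m : ℝ))) * η / σ ^ 2)
      (1 - κH / (σ ^ 2 * (m : ℝ))) ((1 - κH / (σ ^ 2 * (m : ℝ))) * η / σ ^ 2)
      (X₀ m) (Nat.floor (σ ^ 2 * (m : ℝ) * t))) :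
    (0 < κA → Tendsto Im atTop (nhds (((κA - κH) ^ 2 / (2 * σ ^ 2 * κA))
      * ((Xt - η / κA) * (1 - Real.exp (-κA * t)) + η * t)))) ∧
    (κA = 0 → Tendsto Im atTop (nhds ((κH ^ 2 / (2 * σ ^ 2))
      * ((η / 2) * t ^ 2 + Xt * t)))) := by
  have hσ0 : σ ≠ 0 := ne_of_gt hσ
  have hc : (0:ℝ) ≤ η/σ^2 := by positivity
  -- eventual positivity of the branching parameters
  have hposA : ∀ᶠ m : ℕ in atTop, 0 < 1 - κA/(σ^2*(m:ℝ)) := by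
    filter_upwards [(tendsto_xm σ κA).eventually_lt_const (by norm_num : (0:ℝ) < 1)] with m hm
    linarith
  have hposH : ∀ᶠ m : ℕ in atTop, 0 < 1 - κH/(σ^2*(m:ℝ)) := by
    filter_upwards [(tendsto_xm σ κH).eventually_lt_const (by norm_num : (0:ℝ) < 1)] with m hm
    linarith
  have hImEq : ∀ᶠ m : ℕ in atTop, Im m =
      Dv (1 - κA/(σ^2*(m:ℝ))) (1 - κH/(σ^2*(m:ℝ))) *
        (geomA (1 - κA/(σ^2*(m:ℝ))) (Nat.floor (σ^2*(m:ℝ)*t)) * ((X₀ m : ℝ))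
          + bcoef (1 - κA/(σ^2*(m:ℝ))) (η/σ^2) (Nat.floor (σ^2*(m:ℝ)*t))) := by
    filter_upwards [hposA, hposH] with m hmA hmH
    rw [hIm m, mul_div_assoc, mul_div_assoc]
    exact relEnt_eq hmA hmH hc (X₀ m) _
  constructor
  · -- case κA > 0
    intro hκApos
    have hκA0 : κA ≠ 0 := ne_of_gt hκApos
    -- limit of geomA / m
    have hgeo : Tendsto (fun m : ℕ =>
        geomA (1 - κA/(σ^2*(m:ℝ))) (Nat.floor (σ^2*(m:ℝ)*t)) / (m:ℝ))
        atTop (nhds ((1 - Real.exp (-κA*t)) * (σ^2/κA))) := by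
      have hlim : Tendsto (fun m : ℕ =>
          (1 - (1 - κA/(σ^2*(m:ℝ)))^(Nat.floor (σ^2*(m:ℝ)*t))) * (σ^2/κA))
          atTop (nhds ((1 - Real.exp (-κA*t)) * (σ^2/κA))) :=
        (tendsto_const_nhds.sub (tendsto_pow_floor σ κA t hσ hκA ht)).mul tendsto_const_nhds
      apply hlim.congr'
      filter_upwards [eventually_ge_atTop 1] with m hm
      have hm0 : ((m:ℝ)) ≠ 0 := by
        have : (1:ℝ) ≤ (m:ℝ) := by exact_mod_cast hm
        linarith
      have hane : (1 - κA/(σ^2*(m:ℝ))) ≠ 1 := by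
        intro h
        have : κA/(σ^2*(m:ℝ)) = 0 := by linarith [h]
        exact hκA0 (by
          field_simp at this
          simpa using this)
      rw [geomA_eq hane]
      rw [show (1:ℝ) - (1 - κA/(σ^2*(m:ℝ))) = κA/(σ^2*(m:ℝ)) by ring]
      field_simp
    -- limit of bcoef / m^2
    have hbco : Tendsto (fun m : ℕ =>
        bcoef (1 - κA/(σ^2*(m:ℝ))) (η/σ^2) (Nat.floor (σ^2*(m:ℝ)*t)) / (m:ℝ)^2)
        atTop (nhds ((η/σ^2) * (σ^2/κA) *
          (σ^2*t - 1 * ((1 - Real.exp (-κA*t)) * (σ^2/κA))))) := by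
      have hβlim : Tendsto (fun m : ℕ => 1 - κA/(σ^2*(m:ℝ))) atTop (nhds 1) := by
        have h := (tendsto_const_nhds : Tendsto (fun _ : ℕ => (1:ℝ)) atTop (nhds 1)).sub
          (tendsto_xm σ κA)
        rw [sub_zero] at h
        exact h
      have hlim : Tendsto (fun m : ℕ =>
          (η/σ^2) * (σ^2/κA) *
            (((Nat.floor (σ^2*(m:ℝ)*t) : ℝ))/(m:ℝ) -
              (1 - κA/(σ^2*(m:ℝ))) *
                (geomA (1 - κA/(σ^2*(m:ℝ))) (Nat.floor (σ^2*(m:ℝ)*t)) / (m:ℝ))))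
          atTop (nhds ((η/σ^2) * (σ^2/κA) *
            (σ^2*t - 1 * ((1 - Real.exp (-κA*t)) * (σ^2/κA))))) :=
        tendsto_const_nhds.mul ((tendsto_floor_div σ t hσ ht).sub (hβlim.mul hgeo))
      apply hlim.congr'
      filter_upwards [eventually_ge_atTop 1] with m hm
      have hm0 : ((m:ℝ)) ≠ 0 := by
        have : (1:ℝ) ≤ (m:ℝ) := by exact_mod_cast hm
        linarith
      have hsum := sum_geomA (1 - κA/(σ^2*(m:ℝ))) (Nat.floor (σ^2*(m:ℝ)*t))
      have h1β : (1:ℝ) - (1 - κA/(σ^2*(m:ℝ))) = κA/(σ^2*(m:ℝ)) := by ring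
      have hmpos : (0:ℝ) < (m:ℝ) := by
        have : (1:ℝ) ≤ (m:ℝ) := by exact_mod_cast hm
        linarith
      have hne : (1:ℝ) - (1 - κA/(σ^2*(m:ℝ))) ≠ 0 := by
        rw [h1β]
        exact ne_of_gt (div_pos hκApos (mul_pos (pow_pos hσ 2) hmpos))
      have hSig : ∑ j ∈ Finset.range (Nat.floor (σ^2*(m:ℝ)*t)),
          geomA (1 - κA/(σ^2*(m:ℝ))) (j+1)
          = (((Nat.floor (σ^2*(m:ℝ)*t)):ℝ) - (1 - κA/(σ^2*(m:ℝ))) *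
              geomA (1 - κA/(σ^2*(m:ℝ))) (Nat.floor (σ^2*(m:ℝ)*t)))
            / ((1:ℝ) - (1 - κA/(σ^2*(m:ℝ)))) := by
        rw [eq_div_iff hne, mul_comm]
        exact hsum
      rw [show bcoef (1 - κA/(σ^2*(m:ℝ))) (η/σ^2) (Nat.floor (σ^2*(m:ℝ)*t))
          = (η/σ^2) * ∑ j ∈ Finset.range (Nat.floor (σ^2*(m:ℝ)*t)),
            geomA (1 - κA/(σ^2*(m:ℝ))) (j+1) from rfl]
      rw [hSig, h1β]
      field_simp
    -- assemble
    have hfull : Tendsto (fun m : ℕ =>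
        ((m:ℝ)^2 * Dv (1 - κA/(σ^2*(m:ℝ))) (1 - κH/(σ^2*(m:ℝ)))) *
          ((geomA (1 - κA/(σ^2*(m:ℝ))) (Nat.floor (σ^2*(m:ℝ)*t)) / (m:ℝ)) *
            ((X₀ m : ℝ)/(m:ℝ))
          + bcoef (1 - κA/(σ^2*(m:ℝ))) (η/σ^2) (Nat.floor (σ^2*(m:ℝ)*t)) / (m:ℝ)^2))
        atTop (nhds (((κA-κH)^2/(2*σ^4)) *
          (((1 - Real.exp (-κA*t)) * (σ^2/κA)) * Xt
            + (η/σ^2) * (σ^2/κA) * (σ^2*t - 1 * ((1 - Real.exp (-κA*t)) * (σ^2/κA)))))) :=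
      (tendsto_m2Dv σ κA κH hσ hκA hκH).mul ((hgeo.mul hX₀).add hbco)
    have hval : ((κA-κH)^2/(2*σ^4)) *
        (((1 - Real.exp (-κA*t)) * (σ^2/κA)) * Xt
          + (η/σ^2) * (σ^2/κA) * (σ^2*t - 1 * ((1 - Real.exp (-κA*t)) * (σ^2/κA))))
        = ((κA - κH) ^ 2 / (2 * σ ^ 2 * κA))
          * ((Xt - η / κA) * (1 - Real.exp (-κA * t)) + η * t) := by
      field_simp
      ring
    rw [hval] at hfull
    apply hfull.congr'
    filter_upwards [hImEq, eventually_ge_atTop 1] with m hEq hm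
    have hm0 : ((m:ℝ)) ≠ 0 := by
      have : (1:ℝ) ≤ (m:ℝ) := by exact_mod_cast hm
      linarith
    rw [hEq]
    field_simp
  · -- case κA = 0
    intro hκA0
    subst hκA0
    simp only [zero_div, sub_zero] at hImEq ⊢
    have hm2Dv := tendsto_m2Dv σ 0 κH hσ le_rfl hκH
    simp only [zero_div, sub_zero, zero_sub, neg_sq] at hm2Dv
    have hflim : Tendsto (fun m : ℕ => ((Nat.floor (σ^2*(m:ℝ)*t) : ℝ))/(m:ℝ))
        atTop (nhds (σ^2*t)) := tendsto_floor_div σ t hσ ht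
    have hflim1 : Tendsto (fun m : ℕ => (((Nat.floor (σ^2*(m:ℝ)*t) : ℝ))+1)/(m:ℝ))
        atTop (nhds (σ^2*t + 0)) := by
      have : Tendsto (fun m : ℕ => ((Nat.floor (σ^2*(m:ℝ)*t) : ℝ))/(m:ℝ) + 1/(m:ℝ))
          atTop (nhds (σ^2*t + 0)) := hflim.add tendsto_one_div_atTop_nhds_zero_nat
      apply this.congr
      intro m
      rw [add_div]
    rw [add_zero] at hflim1
    have hfull : Tendsto (fun m : ℕ =>
        ((m:ℝ)^2 * Dv 1 (1 - κH/(σ^2*(m:ℝ)))) *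
          ((((Nat.floor (σ^2*(m:ℝ)*t) : ℝ))/(m:ℝ)) * ((X₀ m : ℝ)/(m:ℝ))
          + (η/σ^2) * ((((Nat.floor (σ^2*(m:ℝ)*t) : ℝ))/(m:ℝ)) *
              ((((Nat.floor (σ^2*(m:ℝ)*t) : ℝ))+1)/(m:ℝ)))/2))
        atTop (nhds ((κH^2/(2*σ^4)) *
          ((σ^2*t) * Xt + (η/σ^2) * ((σ^2*t) * (σ^2*t))/2))) :=
      hm2Dv.mul ((hflim.mul hX₀).add
        ((tendsto_const_nhds.mul (hflim.mul hflim1)).div_const 2))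
    have hval : ((κH:ℝ)^2/(2*σ^4)) * ((σ^2*t) * Xt + (η/σ^2) * ((σ^2*t) * (σ^2*t))/2)
        = (κH ^ 2 / (2 * σ ^ 2)) * ((η / 2) * t ^ 2 + Xt * t) := by
      field_simp
      ring
    rw [hval] at hfull
    apply hfull.congr'
    filter_upwards [hImEq, eventually_ge_atTop 1] with m hEq hm
    have hm0 : ((m:ℝ)) ≠ 0 := by
      have : (1:ℝ) ≤ (m:ℝ) := by exact_mod_cast hm
      linarith
    rw [hEq, geomA_one]
    rw [show bcoef 1 (η/σ^2) (Nat.floor (σ^2*(m:ℝ)*t))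
        = (η/σ^2) * ∑ j ∈ Finset.range (Nat.floor (σ^2*(m:ℝ)*t)), geomA 1 (j+1) from rfl]
    rw [show (∑ j ∈ Finset.range (Nat.floor (σ^2*(m:ℝ)*t)), geomA 1 (j+1))
        = ∑ j ∈ Finset.range (Nat.floor (σ^2*(m:ℝ)*t)), ((j:ℝ)+1) from
      Finset.sum_congr rfl fun j _ => by rw [geomA_one]; push_cast; ring]
    rw [sum_range_id']
    field_simp

end C3
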